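/- Let Γ' be obtained from a weighted forest Γ by blowing up an edge (P,Q), creating a new vertex R, and let d = d(Γ) = d(Γ'). Then d_R = 2·d_{PQ} + d_P + d_Q - d, d_{PR} = d_P + d_{PQ}, and d_{QR} = d_Q + d_{PQ}, where d_{PQ} is the determinant of Γ with the edge (P,Q) removed, d_P, d_Q are vertex determinants in Γ, and d_R, d_{PR}, d_{QR} are the vertex and edge determinants in Γ'. -/

import Mathlib

open Classical Finset

/-- The matrix `Q(Γ)` of a weighted graph: `-a i` on the diagonal, `-1` for
adjacent vertices, `0` otherwise. -/
noncomputable def wMatrix {V : Type*} [Fintype V] (G : SimpleGraph V) (a : V → ℤ) :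
    Matrix V V ℤ :=
  Matrix.of fun i j => if i = j then -a i else if G.Adj i j then (-1 : ℤ) else 0

/-- The determinant `d(Γ)` of a weighted graph. -/
noncomputable def wDet {V : Type*} [Fintype V] (G : SimpleGraph V) (a : V → ℤ) : ℤ :=
  (wMatrix G a).det

/-- The determinant of the weighted graph obtained by deleting a set `s` of
vertices (and all incident edges). -/
noncomputable def wDetDel {V : Type*} [Fintype V] (G : SimpleGraph V) (a : V → ℤ)
    (s : Set V) : ℤ :=
  wDet (SimpleGraph.comap (Subtype.val : {v // v ∉ s} → V) G) (fun v => a v.1)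

/-- The blow-up of a weighted graph at an edge `(P,Q)`. -/
def blowupEdgeGraph {V : Type*} (G : SimpleGraph V) (P Q : V) :
    SimpleGraph (V ⊕ Unit) where
  Adj x y :=
    match x, y with
    | Sum.inl u, Sum.inl v => G.Adj u v ∧ ¬((u = P ∧ v = Q) ∨ (u = Q ∧ v = P))
    | Sum.inl u, Sum.inr _ => u = P ∨ u = Q
    | Sum.inr _, Sum.inl v => v = P ∨ v = Q
    | Sum.inr _, Sum.inr _ => False
  symm := by
    constructor
    rintro (u | u) (v | v) h
    · exact ⟨G.adj_symm h.1, fun hc => h.2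
        (hc.elim (fun h' => Or.inr ⟨h'.2, h'.1⟩) (fun h' => Or.inl ⟨h'.2, h'.1⟩))⟩
    · exact h
    · exact h
    · exact h.elim
  loopless := by
    constructor
    rintro (u | u) h
    · exact G.irrefl h.1
    · exact h.elim

/-- The weights after blowing up the edge `(P,Q)`. -/
noncomputable def blowupEdgeWeights {V : Type*} [DecidableEq V] (a : V → ℤ) (P Q : V) :
    V ⊕ Unit → ℤ :=
  Sum.elim (Function.update (Function.update a P (a P - 1)) Q (a Q - 1))
    (fun _ => (-1 : ℤ))

open Matrix

private lemma det_pivot {V : Type*} [Fintype V] [DecidableEq V] (M : Matrix V V ℤ) (P : V)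
    (hcol : ∀ i, i ≠ P → M i P = 0) (hPP : M P P = 1) :
    M.det = (M.submatrix (Subtype.val : {v // v ≠ P} → V) Subtype.val).det := by
  classical
  let e : {v // v ≠ P} ⊕ Unit ≃ V :=
  { toFun := Sum.elim Subtype.val fun _ => P
    invFun := fun v => if h : v = P then Sum.inr () else Sum.inl ⟨v, h⟩
    left_inv := by
      rintro (⟨v, hv⟩ | ⟨⟩)
      · simp [hv]
      · simp
    right_inv := fun v => by by_cases h : v = P <;> simp [h] }
  rw [← Matrix.det_submatrix_equiv_self e M]
  have he : M.submatrix e e =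
      Matrix.fromBlocks (M.submatrix Subtype.val Subtype.val) 0
        (Matrix.of fun (_ : Unit) j => M P j.1) 1 := by
    ext i j
    rcases i with i | i <;> rcases j with j | j
    · rfl
    · simpa [e, Matrix.fromBlocks] using hcol i.1 i.2
    · rfl
    · simpa [e, Matrix.fromBlocks, Matrix.one_apply] using hPP
  rw [he, Matrix.det_fromBlocks_zero₁₂, Matrix.det_one, mul_one]

private lemma det_bump {V : Type*} [Fintype V] [DecidableEq V] (M : Matrix V V ℤ) (P : V) :
    (Matrix.of fun i j => M i j + if i = P ∧ j = P then 1 else 0).det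
      = M.det + (M.submatrix (Subtype.val : {v // v ≠ P} → V) Subtype.val).det := by
  classical
  have h1 : (Matrix.of fun i j => M i j + if i = P ∧ j = P then 1 else 0)
      = M.updateCol P ((fun i => M i P) + (fun i => if i = P then 1 else 0)) := by
    ext i j
    by_cases h : j = P <;> simp [Matrix.updateCol_apply, h]
  rw [h1, Matrix.det_updateCol_add, Matrix.updateCol_eq_self]
  congr 1
  have h2 := det_pivot (M.updateCol P (fun i => if i = P then 1 else 0)) P
    (fun i hi => by simp [Matrix.updateCol_apply, hi]) (by simp [Matrix.updateCol_apply])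
  rw [h2]
  congr 1
  ext i j
  simp [Matrix.updateCol_apply, j.2]

private lemma det_cross_zero {V : Type*} [Fintype V] [DecidableEq V] (M : Matrix V V ℤ)
    (S : Set V) [DecidablePred (· ∈ S)] (P Q : V) (hP : P ∈ S) (hQ : Q ∉ S)
    (hblock : ∀ u ∈ S, ∀ v ∉ S, M u v = 0) :
    (M.updateCol P (fun i => if i = Q then (-1 : ℤ) else 0)).det = 0 := by
  classical
  set K := M.updateCol P (fun i => if i = Q then (-1 : ℤ) else 0) with hK
  let e := Equiv.sumCompl (· ∈ S)
  rw [← Matrix.det_submatrix_equiv_self e K]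
  have he : K.submatrix e e =
      Matrix.fromBlocks (Matrix.of fun i j => K i.1 j.1) 0
        (Matrix.of fun i j => K i.1 j.1) (Matrix.of fun i j => K i.1 j.1) := by
    ext i j
    rcases i with i | i <;> rcases j with j | j
    · rfl
    · have hjP : j.1 ≠ P := fun h => j.2 (h ▸ hP)
      have : K i.1 j.1 = M i.1 j.1 := by simp [hK, Matrix.updateCol_apply, hjP]
      simpa [e, Matrix.fromBlocks, this] using hblock i.1 i.2 j.1 j.2
    · rfl
    · rfl
  rw [he, Matrix.det_fromBlocks_zero₁₂]
  have hA : (Matrix.of fun (i j : {a // a ∈ S}) => K i.1 j.1).det = 0 := by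
    apply Matrix.det_eq_zero_of_column_eq_zero ⟨P, hP⟩
    intro i
    have hiQ : i.1 ≠ Q := fun h => hQ (h ▸ i.2)
    simp [hK, Matrix.updateCol_apply, hiQ]
  rw [hA, zero_mul]

private lemma col_comm {V : Type*} [Fintype V] [DecidableEq V] (M : Matrix V V ℤ)
    {P Q : V} (h : P ≠ Q) (u v : V → ℤ) :
    (M.updateCol P u).updateCol Q v = (M.updateCol Q v).updateCol P u := by
  ext i j
  by_cases h1 : j = Q <;> by_cases h2 : j = P <;>
    simp_all [Matrix.updateCol_apply]

private lemma det_edge_split {V : Type*} [Fintype V] [DecidableEq V] (MH : Matrix V V ℤ)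
    (P Q : V) (hne : P ≠ Q)
    (hcrossP : (MH.updateCol P (fun i => if i = Q then (-1 : ℤ) else 0)).det = 0)
    (hcrossQ : (MH.updateCol Q (fun i => if i = P then (-1 : ℤ) else 0)).det = 0) :
    ((MH.updateCol P (fun i => MH i P + if i = Q then (-1 : ℤ) else 0)).updateCol Q
        (fun i => MH i Q + if i = P then (-1 : ℤ) else 0)).det
      = MH.det -
        ((MH.submatrix (Subtype.val : {v // v ≠ Q} → V) Subtype.val).submatrix
          (Subtype.val : {w : {v // v ≠ Q} // w ≠ ⟨P, hne⟩} → {v // v ≠ Q})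
          Subtype.val).det := by
  classical
  set eP : V → ℤ := fun i => if i = P then (-1 : ℤ) else 0 with heP
  set eQ : V → ℤ := fun i => if i = Q then (-1 : ℤ) else 0 with heQ
  set eP1 : V → ℤ := fun i => if i = P then (1 : ℤ) else 0 with heP1
  set eQ1 : V → ℤ := fun i => if i = Q then (1 : ℤ) else 0 with heQ1
  set M1 := MH.updateCol P (fun i => MH i P + eQ i) with hM1
  have step1 : (M1.updateCol Q (fun i => MH i Q + eP i)).det
      = (M1.updateCol Q (fun i => MH i Q)).det + (M1.updateCol Q eP).det := by
    have : (fun i => MH i Q + eP i) = (fun i => MH i Q) + eP := rfl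
    rw [this, Matrix.det_updateCol_add]
  have e1 : M1.updateCol Q (fun i => MH i Q) = M1 := by
    have : (fun i => MH i Q) = fun i => M1 i Q := by
      funext i; simp [hM1, Matrix.updateCol_apply, Ne.symm hne]
    rw [this, Matrix.updateCol_eq_self]
  have dM1 : M1.det = MH.det := by
    have : (fun i => MH i P + eQ i) = (fun i => MH i P) + eQ := rfl
    rw [hM1, this, Matrix.det_updateCol_add, Matrix.updateCol_eq_self, hcrossP, add_zero]
  -- second term
  have e2 : M1.updateCol Q eP = (MH.updateCol Q eP).updateCol P (fun i => MH i P + eQ i) := by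
    rw [hM1, col_comm MH hne]
  have step2 : (M1.updateCol Q eP).det
      = ((MH.updateCol Q eP).updateCol P (fun i => MH i P)).det
        + ((MH.updateCol Q eP).updateCol P eQ).det := by
    rw [e2]
    have : (fun i => MH i P + eQ i) = (fun i => MH i P) + eQ := rfl
    rw [this, Matrix.det_updateCol_add]
  have e3 : (MH.updateCol Q eP).updateCol P (fun i => MH i P) = MH.updateCol Q eP := by
    have : (fun i => MH i P) = fun i => (MH.updateCol Q eP) i P := by
      funext i; simp [Matrix.updateCol_apply, hne]
    rw [this, Matrix.updateCol_eq_self]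
  -- T4 computation
  set M3 := (MH.updateCol P eP1).updateCol Q eQ1 with hM3
  set M4 := (MH.updateCol P eQ1).updateCol Q eP1 with hM4
  have hsm1 : eQ = (-1 : ℤ) • eQ1 := by
    funext i; by_cases h : i = Q <;> simp [heQ, heQ1, h]
  have hsm2 : eP = (-1 : ℤ) • eP1 := by
    funext i; by_cases h : i = P <;> simp [heP, heP1, h]
  have hswap : M4 = M3.submatrix id (Equiv.swap P Q) := by
    ext i j
    by_cases h1 : j = P
    · subst h1; simp [hM3, hM4, Matrix.updateCol_apply, hne, Ne.symm hne]
    · by_cases h2 : j = Q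
      · subst h2; simp [hM3, hM4, Matrix.updateCol_apply, hne, Ne.symm hne]
      · simp [hM3, hM4, Matrix.updateCol_apply, h1, h2, Equiv.swap_apply_of_ne_of_ne]
  have hM4det : M4.det = - M3.det := by
    rw [hswap, Matrix.det_permute', Equiv.Perm.sign_swap hne]
    push_cast
    ring
  have hT4 : ((MH.updateCol Q eP).updateCol P eQ).det = - M3.det := by
    rw [col_comm MH (Ne.symm hne) eP eQ, hsm2, Matrix.det_updateCol_smul,
      col_comm MH hne eQ eP1, hsm1, Matrix.det_updateCol_smul,
      ← col_comm MH hne eQ1 eP1, ← hM4, hM4det]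
    ring
  -- det M3 equals the double minor of MH
  have hp1 : M3.det = (M3.submatrix (Subtype.val : {v // v ≠ Q} → V) Subtype.val).det := by
    apply det_pivot
    · intro i hi; simp [hM3, Matrix.updateCol_apply, heQ1, hi]
    · simp [hM3, Matrix.updateCol_apply, heQ1]
  have hp2 : (M3.submatrix (Subtype.val : {v // v ≠ Q} → V) Subtype.val).det
      = ((M3.submatrix (Subtype.val : {v // v ≠ Q} → V) Subtype.val).submatrix
          (Subtype.val : {w : {v // v ≠ Q} // w ≠ ⟨P, hne⟩} → {v // v ≠ Q}) Subtype.val).det := by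
    apply det_pivot
    · intro i hi
      have hi' : i.1 ≠ P := fun h => hi (Subtype.ext h)
      simp [hM3, Matrix.updateCol_apply, heP1, heQ1, hi', i.2]
    · simp [hM3, Matrix.updateCol_apply, heP1, heQ1, hne]
  have hD2 : M3.det = ((MH.submatrix (Subtype.val : {v // v ≠ Q} → V) Subtype.val).submatrix
      (Subtype.val : {w : {v // v ≠ Q} // w ≠ ⟨P, hne⟩} → {v // v ≠ Q}) Subtype.val).det := by
    rw [hp1, hp2]
    congr 1
    ext i j
    have hjP : j.1.1 ≠ P := fun h => j.2 (Subtype.ext h)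
    have hjQ : j.1.1 ≠ Q := j.1.2
    simp [hM3, Matrix.updateCol_apply, hjP, hjQ]
  have goal_eq : (MH.updateCol P (fun i => MH i P + if i = Q then (-1 : ℤ) else 0)).updateCol Q
      (fun i => MH i Q + if i = P then (-1 : ℤ) else 0)
      = M1.updateCol Q (fun i => MH i Q + eP i) := rfl
  rw [goal_eq, step1, e1, dM1, step2, e3, hcrossQ, hT4, hD2]
  ring

private lemma wDetDel_singleton {V : Type*} [Fintype V] [DecidableEq V]
    (G : SimpleGraph V) (a : V → ℤ) (P : V) :
    wDetDel G a {P}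
      = ((wMatrix G a).submatrix (Subtype.val : {v // v ≠ P} → V) Subtype.val).det := by
  classical
  let e : {v // v ≠ P} ≃ {v // v ∉ ({P} : Set V)} :=
    Equiv.subtypeEquivRight (fun v => by simp)
  have h : ((wMatrix (SimpleGraph.comap (Subtype.val : {v // v ∉ ({P} : Set V)} → V) G)
        (fun v => a v.1)).submatrix e e)
      = (wMatrix G a).submatrix (Subtype.val : {v // v ≠ P} → V) Subtype.val := by
    ext i j
    have he : ∀ x : {v // v ≠ P}, (e x).1 = x.1 := fun _ => rfl
    by_cases hij : (i : V) = (j : V)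
    · have : e i = e j := Subtype.ext (by rw [he, he, hij])
      simp [wMatrix, this, hij, he]
    · have : e i ≠ e j := fun h' => hij (by rw [← he i, ← he j, h'])
      simp [wMatrix, this, hij, he]
  unfold wDetDel wDet
  rw [← h, Matrix.det_submatrix_equiv_self]
  congr!

private lemma wDet_eq_det {V : Type*} [Fintype V] [DecidableEq V] (G : SimpleGraph V)
    (a : V → ℤ) : wDet G a = (wMatrix G a).det := by
  unfold wDet
  congr!

/-- Lemma 5.7, Case 2: after blowing up an edge `(P,Q)` of a weighted forest `Γ`
(with `d = d(Γ) = d(Γ')`), the new vertex `R` satisfies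
`d_R = 2·d_{PQ} + d_P + d_Q - d`, and the new edges satisfy
`d_{PR} = d_P + d_{PQ}` and `d_{QR} = d_Q + d_{PQ}`. -/
theorem forest_det_blowup_edge_labels {V : Type*} [Fintype V] [DecidableEq V]
    (G : SimpleGraph V) (hG : G.IsAcyclic) (a : V → ℤ) (P Q : V)
    (hPQ : G.Adj P Q)
    (hd : wDet (blowupEdgeGraph G P Q) (blowupEdgeWeights a P Q) = wDet G a) :
    wDetDel (blowupEdgeGraph G P Q) (blowupEdgeWeights a P Q) {Sum.inr ()} =
        2 * wDet (G.deleteEdges {s(P, Q)}) a + wDetDel G a {P} + wDetDel G a {Q}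
          - wDet G a ∧
      wDet ((blowupEdgeGraph G P Q).deleteEdges {s(Sum.inl P, Sum.inr ())})
          (blowupEdgeWeights a P Q) =
        wDetDel G a {P} + wDet (G.deleteEdges {s(P, Q)}) a ∧
      wDet ((blowupEdgeGraph G P Q).deleteEdges {s(Sum.inl Q, Sum.inr ())})
          (blowupEdgeWeights a P Q) =
        wDetDel G a {Q} + wDet (G.deleteEdges {s(P, Q)}) a := by
  classical
  have hne : P ≠ Q := hPQ.ne
  set H := G.deleteEdges {s(P, Q)} with hH
  set MH := wMatrix H a with hMH
  set b : V → ℤ := Function.update (Function.update a P (a P - 1)) Q (a Q - 1) with hb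
  have hbP : b P = a P - 1 := by
    rw [hb, Function.update_of_ne hne, Function.update_self]
  have hbQ : b Q = a Q - 1 := by rw [hb, Function.update_self]
  have hbother : ∀ v, v ≠ P → v ≠ Q → b v = a v := by
    intro v h1 h2; rw [hb, Function.update_of_ne h2, Function.update_of_ne h1]
  set N := wMatrix H b with hN
  -- adjacency of H
  have hadjH : ∀ u v, H.Adj u v ↔ G.Adj u v ∧ ¬((u = P ∧ v = Q) ∨ (u = Q ∧ v = P)) := by
    intro u v
    rw [hH, SimpleGraph.deleteEdges_adj]
    simp [Sym2.eq_iff]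
  -- entries of N
  have hNMH : ∀ i j, N i j = MH i j + (if i = P ∧ j = P then (1 : ℤ) else 0)
      + (if i = Q ∧ j = Q then (1 : ℤ) else 0) := by
    intro i j
    by_cases hij : i = j
    · rcases eq_or_ne j P with hjP | hjP
      · have hjQ : j ≠ Q := fun h => hne (hjP.symm.trans h)
        simp [hN, hMH, wMatrix, hij, hjP, hjQ, hbP, hne]
        ring
      · rcases eq_or_ne j Q with hjQ | hjQ
        · simp [hN, hMH, wMatrix, hij, hjP, hjQ, hbQ, Ne.symm hne]
          ring
        · simp [hN, hMH, wMatrix, hij, hjP, hjQ, hbother j hjP hjQ]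
    · have h1 : ¬(i = P ∧ j = P) := fun h => hij (h.1.trans h.2.symm)
      have h2 : ¬(i = Q ∧ j = Q) := fun h => hij (h.1.trans h.2.symm)
      simp [hN, hMH, wMatrix, hij, h1, h2]
  -- bumped matrices
  set MHP := Matrix.of (fun i j => MH i j + if i = P ∧ j = P then (1 : ℤ) else 0) with hMHP
  set MHQ := Matrix.of (fun i j => MH i j + if i = Q ∧ j = Q then (1 : ℤ) else 0) with hMHQ
  -- transfers of minors from H to G
  have hminP : (MH.submatrix (Subtype.val : {v // v ≠ P} → V) (Subtype.val : {v // v ≠ P} → V))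
      = ((wMatrix G a).submatrix (Subtype.val : {v // v ≠ P} → V) (Subtype.val : {v // v ≠ P} → V)) := by
    ext i j
    by_cases hij : (i : V) = (j : V)
    · simp [hMH, wMatrix, hij]
    · have hadj : H.Adj i.1 j.1 ↔ G.Adj i.1 j.1 := by
        rw [hadjH]
        refine ⟨And.left, fun h => ⟨h, ?_⟩⟩
        rintro (⟨h1, _⟩ | ⟨_, h2⟩)
        exacts [i.2 h1, j.2 h2]
      simp [hMH, wMatrix, hij, hadj]
  have hminQ : (MH.submatrix (Subtype.val : {v // v ≠ Q} → V) (Subtype.val : {v // v ≠ Q} → V))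
      = ((wMatrix G a).submatrix (Subtype.val : {v // v ≠ Q} → V) (Subtype.val : {v // v ≠ Q} → V)) := by
    ext i j
    by_cases hij : (i : V) = (j : V)
    · simp [hMH, wMatrix, hij]
    · have hadj : H.Adj i.1 j.1 ↔ G.Adj i.1 j.1 := by
        rw [hadjH]
        refine ⟨And.left, fun h => ⟨h, ?_⟩⟩
        rintro (⟨_, h1⟩ | ⟨h2, _⟩)
        exacts [j.2 h1, i.2 h2]
      simp [hMH, wMatrix, hij, hadj]
  have dP : wDetDel G a {P}
      = ((MH.submatrix (Subtype.val : {v // v ≠ P} → V) (Subtype.val : {v // v ≠ P} → V))).det := by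
    rw [wDetDel_singleton, hminP]
  have dQ : wDetDel G a {Q}
      = ((MH.submatrix (Subtype.val : {v // v ≠ Q} → V) (Subtype.val : {v // v ≠ Q} → V))).det := by
    rw [wDetDel_singleton, hminQ]
  -- bridge and cross terms
  have hbridge : ¬ H.Reachable P Q := by
    have h1 := (SimpleGraph.isAcyclic_iff_forall_adj_isBridge.mp hG) hPQ
    rw [SimpleGraph.isBridge_iff] at h1
    exact h1
  have hcrossP : (MH.updateCol P (fun i => if i = Q then (-1 : ℤ) else 0)).det = 0 := by
    refine det_cross_zero MH {v | H.Reachable P v} P Q (SimpleGraph.Reachable.refl P)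
      hbridge ?_
    intro u hu v hv
    have huv : u ≠ v := by rintro rfl; exact hv hu
    have hnadj : ¬ H.Adj u v := fun h => hv (hu.trans h.reachable)
    simp [hMH, wMatrix, huv, hnadj]
  have hcrossQ : (MH.updateCol Q (fun i => if i = P then (-1 : ℤ) else 0)).det = 0 := by
    refine det_cross_zero MH {v | H.Reachable Q v} Q P (SimpleGraph.Reachable.refl Q)
      (fun h => hbridge h.symm) ?_
    intro u hu v hv
    have huv : u ≠ v := by rintro rfl; exact hv hu
    have hnadj : ¬ H.Adj u v := fun h => hv (hu.trans h.reachable)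
    simp [hMH, wMatrix, huv, hnadj]
  -- the edge split identity
  have hGmat : (MH.updateCol P
        (fun i => MH i P + if i = Q then (-1 : ℤ) else 0)).updateCol Q
        (fun i => MH i Q + if i = P then (-1 : ℤ) else 0) = wMatrix G a := by
    ext i j
    by_cases hjQ : j = Q
    · by_cases hiP : i = P
      · have h2 : ¬ H.Adj P Q := by rw [hadjH]; tauto
        simp [Matrix.updateCol_apply, hMH, wMatrix, hjQ, hiP, hne, h2, hPQ]
      · by_cases hiQ : i = Q
        · simp [Matrix.updateCol_apply, hMH, wMatrix, hjQ, hiQ, hiP, hne, Ne.symm hne]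
        · have hadj : H.Adj i Q ↔ G.Adj i Q := by
            rw [hadjH]
            refine ⟨And.left, fun h => ⟨h, ?_⟩⟩
            rintro (⟨h1, h2⟩ | ⟨h1, h2⟩) <;> simp_all
          simp [Matrix.updateCol_apply, hMH, wMatrix, hjQ, hiP, hiQ, hadj, hne, Ne.symm hne]
    · by_cases hjP : j = P
      · by_cases hiQ : i = Q
        · have h2 : ¬ H.Adj Q P := by rw [hadjH]; tauto
          simp [Matrix.updateCol_apply, hMH, wMatrix, hjP, hiQ, hne, Ne.symm hne, hjQ, h2, hPQ.symm]
        · by_cases hiP : i = P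
          · simp [Matrix.updateCol_apply, hMH, wMatrix, hjP, hiP, hiQ, hjQ, hne, Ne.symm hne]
          · have hadj : H.Adj i P ↔ G.Adj i P := by
              rw [hadjH]
              refine ⟨And.left, fun h => ⟨h, ?_⟩⟩
              rintro (⟨h1, h2⟩ | ⟨h1, h2⟩) <;> simp_all
            simp [Matrix.updateCol_apply, hMH, wMatrix, hjP, hiP, hiQ, hjQ, hadj, hne, Ne.symm hne]
      · have hadj : H.Adj i j ↔ G.Adj i j := by
          rw [hadjH]
          refine ⟨And.left, fun h => ⟨h, ?_⟩⟩
          rintro (⟨h1, h2⟩ | ⟨h1, h2⟩) <;> simp_all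
        by_cases hij : i = j
        · simp [Matrix.updateCol_apply, hMH, wMatrix, hjQ, hjP, hij]
        · simp [Matrix.updateCol_apply, hMH, wMatrix, hjQ, hjP, hij, hadj]
  have hsplit := det_edge_split MH P Q hne hcrossP hcrossQ
  rw [hGmat] at hsplit
  -- name for the double minor
  set D2 : ℤ := ((MH.submatrix (Subtype.val : {v // v ≠ Q} → V) (Subtype.val : {v // v ≠ Q} → V)).submatrix
      (Subtype.val : {w : {v // v ≠ Q} // w ≠ ⟨P, hne⟩} → {v // v ≠ Q})
      (Subtype.val : {w : {v // v ≠ Q} // w ≠ ⟨P, hne⟩} → {v // v ≠ Q})).det with hD2def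
  have hD2 : D2 = MH.det - (wMatrix G a).det := by rw [hD2def]; omega
  -- determinant of N via double bump
  have hMHPdet : MHP.det
      = MH.det + ((MH.submatrix (Subtype.val : {v // v ≠ P} → V) (Subtype.val : {v // v ≠ P} → V))).det := by
    rw [hMHP]; exact det_bump MH P
  have hMHQdet : MHQ.det
      = MH.det + ((MH.submatrix (Subtype.val : {v // v ≠ Q} → V) (Subtype.val : {v // v ≠ Q} → V))).det := by
    rw [hMHQ]; exact det_bump MH Q
  have hsubP : MHP.submatrix (Subtype.val : {v // v ≠ Q} → V) (Subtype.val : {v // v ≠ Q} → V)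
      = Matrix.of (fun i j => (MH.submatrix (Subtype.val : {v // v ≠ Q} → V) (Subtype.val : {v // v ≠ Q} → V)) i j
          + if i = (⟨P, hne⟩ : {v // v ≠ Q}) ∧ j = ⟨P, hne⟩ then (1 : ℤ) else 0) := by
    ext i j
    have hiff : (i = (⟨P, hne⟩ : {v // v ≠ Q}) ∧ j = ⟨P, hne⟩) ↔ (i.1 = P ∧ j.1 = P) := by
      constructor
      · rintro ⟨rfl, rfl⟩; exact ⟨rfl, rfl⟩
      · rintro ⟨h1, h2⟩; exact ⟨Subtype.ext h1, Subtype.ext h2⟩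
    by_cases h : i.1 = P ∧ j.1 = P <;> simp [hMHP, hiff, h]
  have hMHPminor : (MHP.submatrix (Subtype.val : {v // v ≠ Q} → V) (Subtype.val : {v // v ≠ Q} → V)).det
      = ((MH.submatrix (Subtype.val : {v // v ≠ Q} → V) (Subtype.val : {v // v ≠ Q} → V))).det + D2 := by
    rw [hsubP, hD2def]
    exact det_bump _ _
  have hNeqMHP : N = Matrix.of (fun i j => MHP i j + if i = Q ∧ j = Q then (1 : ℤ) else 0) := by
    ext i j
    rw [hNMH i j]
    simp [hMHP]
  have hNdet : N.det = 2 * MH.det + wDetDel G a {P} + wDetDel G a {Q}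
      - (wMatrix G a).det := by
    rw [hNeqMHP, det_bump MHP Q, hMHPdet, hMHPminor, hD2, dP, dQ]
    ring
  have hA1' : ∀ u v : V, (blowupEdgeGraph G P Q).Adj (Sum.inl u) (Sum.inl v)
      ↔ (G.Adj u v ∧ ¬((u = P ∧ v = Q) ∨ (u = Q ∧ v = P))) := fun _ _ => Iff.rfl
  have hA2' : ∀ u : V, (blowupEdgeGraph G P Q).Adj (Sum.inl u) (Sum.inr ())
      ↔ (u = P ∨ u = Q) := fun _ => Iff.rfl
  have hA3' : ∀ v : V, (blowupEdgeGraph G P Q).Adj (Sum.inr ()) (Sum.inl v)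
      ↔ (v = P ∨ v = Q) := fun _ => Iff.rfl
  have hA4' : ¬ (blowupEdgeGraph G P Q).Adj (Sum.inr ()) (Sum.inr ()) := fun h => h
  have hw1 : ∀ v : V, blowupEdgeWeights a P Q (Sum.inl v) = b v := fun _ => by
    rw [hb]; rfl
  have hw2 : blowupEdgeWeights a P Q (Sum.inr ()) = -1 := rfl
  have hadjHiff : ∀ u v : V, (G.Adj u v ∧ ¬((u = P ∧ v = Q) ∨ (u = Q ∧ v = P))) ↔ H.Adj u v :=
    fun u v => (hadjH u v).symm
  have hWH : wDet H a = MH.det := by rw [wDet_eq_det, hMH]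
  refine ⟨?_, ?_, ?_⟩
  · -- d_R
    have hT1 : wDetDel (blowupEdgeGraph G P Q) (blowupEdgeWeights a P Q) {Sum.inr ()}
        = N.det := by
      let ι : V ≃ {x : V ⊕ Unit // x ∉ ({Sum.inr ()} : Set (V ⊕ Unit))} :=
      { toFun := fun v => ⟨Sum.inl v, by simp⟩
        invFun := fun x => Sum.elim id (fun _ => P) x.1
        left_inv := fun v => rfl
        right_inv := by
          rintro ⟨(v | u), hx⟩
          · rfl
          · simp at hx }
      have h : ((wMatrix (SimpleGraph.comap
            (Subtype.val : {x : V ⊕ Unit // x ∉ ({Sum.inr ()} : Set (V ⊕ Unit))} → V ⊕ Unit)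
            (blowupEdgeGraph G P Q)) (fun x => blowupEdgeWeights a P Q x.1)).submatrix ι ι)
          = N := by
        ext i j
        by_cases hij : i = j
        · simp [wMatrix, hij, hN, hw1, ι]
          exact hw1 j
        · have hij' : (ι i) ≠ (ι j) := fun h' =>
            hij (Sum.inl.inj (congrArg Subtype.val h'))
          simp only [Matrix.submatrix_apply, wMatrix, Matrix.of_apply, hN]
          rw [if_neg hij', if_neg hij]
          have hadj' : (SimpleGraph.comap
              (Subtype.val : {x : V ⊕ Unit // x ∉ ({Sum.inr ()} : Set (V ⊕ Unit))} → V ⊕ Unit)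
              (blowupEdgeGraph G P Q)).Adj (ι i) (ι j) ↔ H.Adj i j := by
            rw [hadjH]
            simp [SimpleGraph.comap, hA1', ι]
            show (blowupEdgeGraph G P Q).Adj (Sum.inl i) (Sum.inl j) ↔ _
            rw [hA1']
            simp only [not_or, not_and]
          by_cases hH' : H.Adj i j
          · rw [if_pos (hadj'.mpr hH'), if_pos hH']
          · rw [if_neg (mt hadj'.mp hH'), if_neg hH']
      unfold wDetDel wDet
      rw [← h, Matrix.det_submatrix_equiv_self]
      congr!
    rw [hT1, hNdet, hWH, wDet_eq_det G a]
  · -- d_{PR}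
    set B2 : Matrix V Unit ℤ :=
      Matrix.of (fun (v : V) (_ : Unit) => if v = Q then (-1 : ℤ) else 0) with hB2
    set C2 : Matrix Unit V ℤ :=
      Matrix.of (fun (_ : Unit) (v : V) => if v = Q then (-1 : ℤ) else 0) with hC2
    have hblk : wMatrix ((blowupEdgeGraph G P Q).deleteEdges {s(Sum.inl P, Sum.inr ())})
        (blowupEdgeWeights a P Q) = Matrix.fromBlocks N B2 C2 1 := by
      ext x y
      rcases x with u | u <;> rcases y with v | v
      · by_cases huv : u = v
        · simp [wMatrix, huv, hN, hw1]
        · have hadj' : ((blowupEdgeGraph G P Q).deleteEdges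
              {s(Sum.inl P, Sum.inr ())}).Adj (Sum.inl u) (Sum.inl v) ↔ H.Adj u v := by
            rw [hadjH]
            simp [hA1', Sym2.eq_iff]
          simp only [wMatrix, Matrix.of_apply, Matrix.fromBlocks_apply₁₁, hN]
          rw [if_neg (by simp [huv]), if_neg huv]
          by_cases hH' : H.Adj u v
          · rw [if_pos (hadj'.mpr hH'), if_pos hH']
          · rw [if_neg (mt hadj'.mp hH'), if_neg hH']
      · rcases v
        by_cases huP : u = P
        · have huQ : u ≠ Q := fun h => hne (huP.symm.trans h)
          simp [wMatrix, hB2, hA2', Sym2.eq_iff, huP, huQ, hne, Ne.symm hne]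
        · by_cases huQ : u = Q
          · simp [wMatrix, hB2, hA2', Sym2.eq_iff, huP, huQ, hne, Ne.symm hne]
          · simp [wMatrix, hB2, hA2', Sym2.eq_iff, huP, huQ, hne, Ne.symm hne]
      · rcases u
        by_cases hvP : v = P
        · have hvQ : v ≠ Q := fun h => hne (hvP.symm.trans h)
          simp [wMatrix, hC2, hA3', Sym2.eq_iff, hvP, hvQ, hne, Ne.symm hne]
        · by_cases hvQ : v = Q
          · simp [wMatrix, hC2, hA3', Sym2.eq_iff, hvP, hvQ, hne, Ne.symm hne]
          · simp [wMatrix, hC2, hA3', Sym2.eq_iff, hvP, hvQ, hne, Ne.symm hne]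
      · rcases u; rcases v
        simp [wMatrix, hA4', hw2, Matrix.one_apply]
    have hBC : N - B2 * C2 = MHP := by
      ext i j
      have hm : (B2 * C2) i j = if i = Q ∧ j = Q then (1 : ℤ) else 0 := by
        by_cases h1 : i = Q <;> by_cases h2 : j = Q <;>
          simp [Matrix.mul_apply, hB2, hC2, h1, h2]
      rw [Matrix.sub_apply, hm, hNMH i j]
      simp [hMHP]
    rw [wDet_eq_det, hblk, Matrix.det_fromBlocks_one₂₂, hBC, hMHPdet, ← dP, hWH]
    ring
  · -- d_{QR}
    set B3 : Matrix V Unit ℤ :=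
      Matrix.of (fun (v : V) (_ : Unit) => if v = P then (-1 : ℤ) else 0) with hB3
    set C3 : Matrix Unit V ℤ :=
      Matrix.of (fun (_ : Unit) (v : V) => if v = P then (-1 : ℤ) else 0) with hC3
    have hblk : wMatrix ((blowupEdgeGraph G P Q).deleteEdges {s(Sum.inl Q, Sum.inr ())})
        (blowupEdgeWeights a P Q) = Matrix.fromBlocks N B3 C3 1 := by
      ext x y
      rcases x with u | u <;> rcases y with v | v
      · by_cases huv : u = v
        · simp [wMatrix, huv, hN, hw1]
        · have hadj' : ((blowupEdgeGraph G P Q).deleteEdges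
              {s(Sum.inl Q, Sum.inr ())}).Adj (Sum.inl u) (Sum.inl v) ↔ H.Adj u v := by
            rw [hadjH]
            simp [hA1', Sym2.eq_iff]
          simp only [wMatrix, Matrix.of_apply, Matrix.fromBlocks_apply₁₁, hN]
          rw [if_neg (by simp [huv]), if_neg huv]
          by_cases hH' : H.Adj u v
          · rw [if_pos (hadj'.mpr hH'), if_pos hH']
          · rw [if_neg (mt hadj'.mp hH'), if_neg hH']
      · rcases v
        by_cases huQ : u = Q
        · have huP : u ≠ P := fun h => hne (h.symm.trans huQ)
          simp [wMatrix, hB3, hA2', Sym2.eq_iff, huP, huQ, hne, Ne.symm hne]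
        · by_cases huP : u = P
          · simp [wMatrix, hB3, hA2', Sym2.eq_iff, huP, huQ, hne, Ne.symm hne]
          · simp [wMatrix, hB3, hA2', Sym2.eq_iff, huP, huQ, hne, Ne.symm hne]
      · rcases u
        by_cases hvQ : v = Q
        · have hvP : v ≠ P := fun h => hne (h.symm.trans hvQ)
          simp [wMatrix, hC3, hA3', Sym2.eq_iff, hvP, hvQ, hne, Ne.symm hne]
        · by_cases hvP : v = P
          · simp [wMatrix, hC3, hA3', Sym2.eq_iff, hvP, hvQ, hne, Ne.symm hne]
          · simp [wMatrix, hC3, hA3', Sym2.eq_iff, hvP, hvQ, hne, Ne.symm hne]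
      · rcases u; rcases v
        simp [wMatrix, hA4', hw2, Matrix.one_apply]
    have hBC : N - B3 * C3 = MHQ := by
      ext i j
      have hm : (B3 * C3) i j = if i = P ∧ j = P then (1 : ℤ) else 0 := by
        by_cases h1 : i = P <;> by_cases h2 : j = P <;>
          simp [Matrix.mul_apply, hB3, hC3, h1, h2]
      rw [Matrix.sub_apply, hm, hNMH i j]
      simp [hMHQ]
      ring
    rw [wDet_eq_det, hblk, Matrix.det_fromBlocks_one₂₂, hBC, hMHQdet, ← dQ, hWH]
    ring
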